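/- Let G be a minimal non-weakly flat path extendable graph. Then G does not have a clique cutset. -/

import Mathlib

open Classical

universe u

/-- `IsHoleOn G n H`: `H` is the vertex set of an induced cycle of `G` of length `n ≥ 4`. -/
def IsHoleOn {V : Type u} (G : SimpleGraph V) (n : ℕ) (H : Set V) : Prop :=
  4 ≤ n ∧ ∃ f : ZMod n → V, Function.Injective f ∧ Set.range f = H ∧
    ∀ i j : ZMod n, G.Adj (f i) (f j) ↔ (j = i + 1 ∨ i = j + 1)

/-- A hole: an induced cycle of length at least 4. -/
def IsHole {V : Type u} (G : SimpleGraph V) (H : Set V) : Prop :=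
  ∃ n : ℕ, IsHoleOn G n H

/-- No induced cycle of even length. -/
def EvenHoleFree {V : Type u} (G : SimpleGraph V) : Prop :=
  ∀ (n : ℕ) (H : Set V), IsHoleOn G n H → ¬ Even n

/-- `G[X]` is chordal: no hole of `G` is contained in `X`. -/
def ChordalSet {V : Type u} (G : SimpleGraph V) (X : Set V) : Prop :=
  ∀ H : Set V, H ⊆ X → ¬ IsHole G H

/-- A wheel `(H, w)`: a hole `H` and `w ∉ H` with at least 3 neighbors in `H`. -/
def IsWheel {V : Type u} (G : SimpleGraph V) (H : Set V) (w : V) : Prop :=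
  IsHole G H ∧ w ∉ H ∧ 3 ≤ (H ∩ {u | G.Adj w u}).ncard

/-- An induced path of `G`, recorded as the list of its vertices in order. -/
def IsInducedPathList {V : Type u} (G : SimpleGraph V) (l : List V) : Prop :=
  l ≠ [] ∧ l.Nodup ∧
    ∀ (i j : ℕ) (hi : i < l.length) (hj : j < l.length),
      G.Adj (l.get ⟨i, hi⟩) (l.get ⟨j, hj⟩) ↔ (i + 1 = j ∨ j + 1 = i)

/-- A vertex set that induces a path. -/
def InducesPath {V : Type u} (G : SimpleGraph V) (S : Set V) : Prop :=
  ∃ l : List V, IsInducedPathList G l ∧ {v | v ∈ l} = S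

/-- A sector wheel: a wheel `(H, w)` where `w` is complete to `H` or
`N(w) ∩ H` induces a path. -/
def IsSectorWheel {V : Type u} (G : SimpleGraph V) (H : Set V) (w : V) : Prop :=
  IsWheel G H w ∧
    ((∀ u ∈ H, G.Adj w u) ∨ InducesPath G (H ∩ {u | G.Adj w u}))

/-- A twin wheel: a wheel `(H, w)` where `N(w) ∩ H` induces a three-vertex path. -/
def IsTwinWheel {V : Type u} (G : SimpleGraph V) (H : Set V) (w : V) : Prop :=
  IsWheel G H w ∧ ∃ a b c : V, a ≠ b ∧ b ≠ c ∧ a ≠ c ∧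
    H ∩ {u | G.Adj w u} = {a, b, c} ∧ G.Adj a b ∧ G.Adj b c ∧ ¬ G.Adj a c

/-- A short pyramid: a wheel `(H, w)` where `N(w) ∩ H` is an edge plus an isolated vertex. -/
def IsShortPyramid {V : Type u} (G : SimpleGraph V) (H : Set V) (w : V) : Prop :=
  IsWheel G H w ∧ ∃ a b c : V, a ≠ b ∧ b ≠ c ∧ a ≠ c ∧
    H ∩ {u | G.Adj w u} = {a, b, c} ∧ G.Adj a b ∧ ¬ G.Adj a c ∧ ¬ G.Adj b c

/-- A flat path: an induced path all of whose interior vertices have degree 2 in `G`. -/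
def IsFlatPath {V : Type u} (G : SimpleGraph V) (l : List V) : Prop :=
  IsInducedPathList G l ∧
    ∀ (i : ℕ) (hi : i < l.length), 0 < i → i + 1 < l.length →
      ({u | G.Adj (l.get ⟨i, hi⟩) u}).ncard = 2

/-- The closed neighborhood `N[S]` of a set of vertices. -/
def ClosedNbhd {V : Type u} (G : SimpleGraph V) (S : Set V) : Set V :=
  S ∪ {v | ∃ s ∈ S, G.Adj v s}

/-- `(W1, W2)` (a precover on a path with vertex set `S`) extends to a chordal cover of `G`. -/
def ExtendsToCover {V : Type u} (G : SimpleGraph V) (S W1 W2 : Set V) : Prop :=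
  ∃ X1 X2 : Set V, W1 ⊆ X1 ∧ W2 ⊆ X2 ∧ ChordalSet G X1 ∧ ChordalSet G X2 ∧
    X1 ∩ X2 = S ∧ X1 ∪ X2 = Set.univ

/-- Flat path extendable. -/
def FPE {V : Type u} (G : SimpleGraph V) : Prop :=
  ∀ l : List V, IsFlatPath G l →
    ∀ W1 W2 : Set V, ChordalSet G W1 → ChordalSet G W2 →
      W1 ∩ W2 = {v | v ∈ l} → W1 ∪ W2 = ClosedNbhd G {v | v ∈ l} →
      ExtendsToCover G {v | v ∈ l} W1 W2

/-- Weakly flat path extendable: only paths with at most two vertices are considered. -/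
def WeaklyFPE {V : Type u} (G : SimpleGraph V) : Prop :=
  ∀ l : List V, IsInducedPathList G l → l.length ≤ 2 →
    ∀ W1 W2 : Set V, ChordalSet G W1 → ChordalSet G W2 →
      W1 ∩ W2 = {v | v ∈ l} → W1 ∪ W2 = ClosedNbhd G {v | v ∈ l} →
      ExtendsToCover G {v | v ∈ l} W1 W2

/-- Minimal non flat path extendable. -/
def MNFPE {V : Type u} (G : SimpleGraph V) : Prop :=
  ¬ FPE G ∧ ∀ S : Set V, S ≠ Set.univ → FPE (G.induce S)

/-- Minimal non-weakly flat path extendable. -/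
def MinNonWeaklyFPE {V : Type u} (G : SimpleGraph V) : Prop :=
  ¬ WeaklyFPE G ∧ ∀ S : Set V, S ≠ Set.univ → WeaklyFPE (G.induce S)

/-- A witness path `l` with witness sets `W1, W2`: a precover on a flat path
admitting no extension to a chordal cover. -/
def WitnessPath {V : Type u} (G : SimpleGraph V) (l : List V) (W1 W2 : Set V) : Prop :=
  IsFlatPath G l ∧ ChordalSet G W1 ∧ ChordalSet G W2 ∧
    W1 ∩ W2 = {v | v ∈ l} ∧ W1 ∪ W2 = ClosedNbhd G {v | v ∈ l} ∧
    ¬ ExtendsToCover G {v | v ∈ l} W1 W2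

/-- A witness path of length zero or one with witness sets, for the weak notion. -/
def WeakWitness {V : Type u} (G : SimpleGraph V) (l : List V) (W1 W2 : Set V) : Prop :=
  IsInducedPathList G l ∧ l.length ≤ 2 ∧ ChordalSet G W1 ∧ ChordalSet G W2 ∧
    W1 ∩ W2 = {v | v ∈ l} ∧ W1 ∪ W2 = ClosedNbhd G {v | v ∈ l} ∧
    ¬ ExtendsToCover G {v | v ∈ l} W1 W2

/-- `N(v)` is the union of a clique and a singleton. -/
def NearlySimplicial {V : Type u} (G : SimpleGraph V) (v : V) : Prop :=
  ∃ (K : Set V) (u : V), G.IsClique K ∧ {w | G.Adj v w} = K ∪ {u}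

/-- `G` has a star cutset. -/
def HasStarCutset {V : Type u} (G : SimpleGraph V) : Prop :=
  G.Connected ∧ ∃ (v : V) (C : Set V), v ∈ C ∧ C ⊆ insert v {u | G.Adj v u} ∧
    ¬ (G.induce (Cᶜ : Set V)).Connected

/-- `v` is the center of a star cutset of `G`. -/
def IsStarCutsetCenter {V : Type u} (G : SimpleGraph V) (v : V) : Prop :=
  G.Connected ∧ ∃ C : Set V, v ∈ C ∧ C ⊆ insert v {u | G.Adj v u} ∧
    ¬ (G.induce (Cᶜ : Set V)).Connected

/-- `G` has a full star cutset, i.e. a star cutset of the form `N[v]`. -/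
def HasFullStarCutset {V : Type u} (G : SimpleGraph V) : Prop :=
  G.Connected ∧ ∃ v : V,
    ¬ (G.induce (((insert v {u | G.Adj v u}) : Set V)ᶜ)).Connected

/-- A clique cutset. -/
def IsCliqueCutset {V : Type u} (G : SimpleGraph V) (Q : Set V) : Prop :=
  G.IsClique Q ∧ ¬ (G.induce (Qᶜ : Set V)).Connected

/-- `C` is (the vertex set of) a connected component of `G[S]`. -/
def IsCompOf {V : Type u} (G : SimpleGraph V) (S C : Set V) : Prop :=
  ∃ comp : (G.induce S).ConnectedComponent, C = Subtype.val '' comp.supp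

/-- A marker path for the side `(A, C, B)` of a 2-join, with ends `a ∈ A` and `b ∈ B`
and interior in `C`. -/
def IsMarkerPath {V : Type u} (G : SimpleGraph V) (A C B : Set V) (a b : V)
    (l : List V) : Prop :=
  IsInducedPathList G l ∧ a ∈ A ∧ b ∈ B ∧
    ∃ m : List V, l = a :: (m ++ [b]) ∧ ∀ v ∈ m, v ∈ C

/-- A 2-join of `G`. -/
def IsTwoJoin {V : Type u} (G : SimpleGraph V) (A1 C1 B1 A2 C2 B2 : Set V) : Prop :=
  ([A1, C1, B1, A2, C2, B2] : List (Set V)).Pairwise Disjoint ∧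
  A1 ∪ C1 ∪ B1 ∪ A2 ∪ C2 ∪ B2 = Set.univ ∧
  (∀ a ∈ A1, ∀ b ∈ A2, G.Adj a b) ∧
  (∀ a ∈ B1, ∀ b ∈ B2, G.Adj a b) ∧
  (∀ u ∈ A1 ∪ C1 ∪ B1, ∀ v ∈ A2 ∪ C2 ∪ B2, G.Adj u v →
    ((u ∈ A1 ∧ v ∈ A2) ∨ (u ∈ B1 ∧ v ∈ B2))) ∧
  (∃ (a b : V) (l : List V), IsMarkerPath G A1 C1 B1 a b l ∧
      A1 ∪ C1 ∪ B1 ≠ {v | v ∈ l}) ∧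
  (∃ (a b : V) (l : List V), IsMarkerPath G A2 C2 B2 a b l ∧
      A2 ∪ C2 ∪ B2 ≠ {v | v ∈ l})

/-- A leaf of a graph: a vertex of degree one. -/
def IsLeaf {V : Type u} (T : SimpleGraph V) (v : V) : Prop :=
  ({u | T.Adj v u}).ncard = 1

/-- The graph `B(T)` built from a tree `T` whose bipartition is given by the proper
2-coloring `c`: vertices are the edges of `T` plus two extra vertices `x_false, x_true`
(encoded as `Bool`); two edges are adjacent iff they share an endpoint, `x_i` is adjacent
to the pendant edge at each leaf on side `i`, and `x_false` is adjacent to `x_true`. -/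
def BGraph {V : Type u} (T : SimpleGraph V) (c : V → Bool) :
    SimpleGraph (↥T.edgeSet ⊕ Bool) :=
  SimpleGraph.fromRel fun a b =>
    match a, b with
    | Sum.inl e, Sum.inl f => ∃ v : V, v ∈ e.val ∧ v ∈ f.val
    | Sum.inl e, Sum.inr i => ∃ v : V, IsLeaf T v ∧ c v = i ∧ v ∈ e.val
    | Sum.inr _, Sum.inl _ => False
    | Sum.inr _, Sum.inr _ => True

section Helpers

variable {V : Type u} {G : SimpleGraph V}

lemma zmodCastInj {n a b : ℕ} (hn : 0 < n) (ha : a < n) (hb : b < n)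
    (h : (a : ZMod n) = b) : a = b := by
  haveI : NeZero n := ⟨hn.ne'⟩
  have h1 := ZMod.val_cast_of_lt ha
  have h2 := ZMod.val_cast_of_lt hb
  rw [← h1, ← h2, h]

lemma chordal_mono {X Y : Set V} (hXY : X ⊆ Y) (hY : ChordalSet G Y) :
    ChordalSet G X := fun H hH => hY H (hH.trans hXY)

lemma hole_not_dominated {n : ℕ} {H : Set V} {q : V} (h : IsHoleOn G n H)
    (hq : q ∈ H) (hsub : ∀ v ∈ H, v ≠ q → G.Adj q v) : False := by
  obtain ⟨hn4, f, hinj, hrange, hadj⟩ := h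
  have hnpos : 0 < n := by omega
  rw [← hrange] at hq
  obtain ⟨i0, hi0⟩ := hq
  have hfj : f (i0 + 2) ∈ H := hrange ▸ Set.mem_range_self _
  have h20 : ((2 : ℕ) : ZMod n) ≠ ((0 : ℕ) : ZMod n) := by
    intro he; have := zmodCastInj hnpos (by omega) (by omega) he; omega
  have hne : f (i0 + 2) ≠ q := by
    intro he
    rw [← hi0] at he
    have h2 := hinj he
    apply h20
    have : (2 : ZMod n) = 0 := by
      have := add_left_cancel (a := i0) (b := (2 : ZMod n)) (c := 0) (by rw [add_zero]; exact h2)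
      exact this
    simpa using this
  have hadj' : G.Adj (f i0) (f (i0 + 2)) := hi0 ▸ hsub _ hfj hne
  rcases (hadj i0 (i0 + 2)).mp hadj' with h1 | h1
  · have : ((2 : ℕ) : ZMod n) = ((1 : ℕ) : ZMod n) := by
      have := add_left_cancel (a := i0) (b := (2 : ZMod n)) (c := 1) h1
      simpa using this
    have := zmodCastInj hnpos (by omega) (by omega) this; omega
  · have : ((0 : ℕ) : ZMod n) = ((3 : ℕ) : ZMod n) := by
      have h1' : i0 + (0 : ZMod n) = i0 + 3 := by
        rw [add_zero]; exact h1.trans (by ring)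
      have := add_left_cancel h1'
      push_cast
      rw [← this]
    have := zmodCastInj hnpos (by omega) (by omega) this; omega

lemma holeOn_exists_nonadj {n : ℕ} {H : Set V} (h : IsHoleOn G n H) :
    ∃ a b, a ∈ H ∧ b ∈ H ∧ a ≠ b ∧ ¬ G.Adj a b := by
  obtain ⟨hn4, f, hinj, hrange, hadj⟩ := h
  have hnpos : 0 < n := by omega
  refine ⟨f 0, f 2, hrange ▸ Set.mem_range_self _, hrange ▸ Set.mem_range_self _, ?_, ?_⟩
  · intro he
    have := hinj he
    have h02 : ((0 : ℕ) : ZMod n) = ((2 : ℕ) : ZMod n) := by simpa using this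
    have := zmodCastInj hnpos (by omega) (by omega) h02; omega
  · intro hadj'
    rcases (hadj 0 2).mp hadj' with h1 | h1
    · have h12 : ((2 : ℕ) : ZMod n) = ((1 : ℕ) : ZMod n) := by simpa using h1
      have := zmodCastInj hnpos (by omega) (by omega) h12; omega
    · have h03 : ((0 : ℕ) : ZMod n) = ((3 : ℕ) : ZMod n) := by
        push_cast
        exact h1.trans (by ring)
      have := zmodCastInj hnpos (by omega) (by omega) h03; omega

lemma holeOn_image {S : Set V} {n : ℕ} {H' : Set ↥S}
    (h : IsHoleOn (G.induce S) n H') : IsHoleOn G n (Subtype.val '' H') := by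
  obtain ⟨hn4, f, hinj, hrange, hadj⟩ := h
  refine ⟨hn4, Subtype.val ∘ f, Subtype.val_injective.comp hinj, ?_, ?_⟩
  · rw [Set.range_comp, hrange]
  · intro i j
    exact hadj i j

lemma holeOn_restrict {S : Set V} {n : ℕ} {H : Set V}
    (h : IsHoleOn G n H) (hHS : H ⊆ S) :
    IsHoleOn (G.induce S) n {x : ↥S | ↑x ∈ H} := by
  obtain ⟨hn4, f, hinj, hrange, hadj⟩ := h
  have hmem : ∀ i, f i ∈ S := fun i => hHS (hrange ▸ Set.mem_range_self i)
  refine ⟨hn4, fun i => ⟨f i, hmem i⟩, ?_, ?_, ?_⟩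
  · intro i j hij
    exact hinj (congrArg Subtype.val hij)
  · ext x
    constructor
    · rintro ⟨i, rfl⟩
      exact hrange ▸ Set.mem_range_self i
    · intro hx
      have : (x : V) ∈ Set.range f := hrange ▸ hx
      obtain ⟨i, hi⟩ := this
      exact ⟨i, Subtype.ext hi⟩
  · intro i j
    exact hadj i j

lemma chordal_preimage {S : Set V} {W : Set V} (hW : ChordalSet G W) :
    ChordalSet (G.induce S) (Subtype.val ⁻¹' W) := by
  intro H' hH' ⟨n, hn⟩
  exact hW (Subtype.val '' H') (by rintro v ⟨x, hx, rfl⟩; exact hH' hx) ⟨n, holeOn_image hn⟩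

lemma chordal_image {S : Set V} {X : Set ↥S} (hX : ChordalSet (G.induce S) X) :
    ChordalSet G (Subtype.val '' X) := by
  intro H hH ⟨n, hn⟩
  have hHS : H ⊆ S := fun v hv => by
    obtain ⟨x, _, rfl⟩ := hH hv; exact x.2
  refine hX {x : ↥S | ↑x ∈ H} ?_ ⟨n, holeOn_restrict hn hHS⟩
  intro x hx
  obtain ⟨y, hy, hyx⟩ := hH hx
  rwa [Subtype.val_injective.eq_iff.mp hyx] at hy

lemma singleton_inducedPath (a : V) : IsInducedPathList G [a] := by
  refine ⟨by simp, by simp, ?_⟩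
  intro i j hi hj
  simp only [List.length_singleton] at hi hj
  interval_cases i
  interval_cases j
  simp [SimpleGraph.irrefl]


lemma hole_side {Q C D : Set V} {n : ℕ} {H : Set V}
    (hQ : G.IsClique Q)
    (hCD : ∀ c ∈ C, ∀ d ∈ D, ¬ G.Adj c d)
    (hcover : ∀ v : V, v ∈ Q ∨ v ∈ C ∨ v ∈ D)
    (hQC : ∀ v, v ∈ Q → v ∈ C → False)
    (hQD : ∀ v, v ∈ Q → v ∈ D → False)
    (hCDd : ∀ v, v ∈ C → v ∈ D → False)
    (h : IsHoleOn G n H) : (∀ v ∈ H, v ∉ C) ∨ (∀ v ∈ H, v ∉ D) := by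
  by_contra hcon
  push_neg at hcon
  obtain ⟨⟨x, hxH, hxC⟩, y, hyH, hyD⟩ := hcon
  obtain ⟨hn4, f, hinj, hrange, hadj⟩ := h
  have hnpos : 0 < n := by omega
  haveI : NeZero n := ⟨hnpos.ne'⟩
  rw [← hrange] at hxH hyH
  obtain ⟨ix, hix⟩ := hxH
  obtain ⟨jy, hjy⟩ := hyH
  set g : ℕ → V := fun t => f (ix + (t : ℕ)) with hg
  have hg0 : g 0 = x := by simp [hg, hix]
  have hgn : g n = x := by simp [hg, ZMod.natCast_self, hix]
  have hadjc : ∀ t : ℕ, G.Adj (g t) (g (t + 1)) := by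
    intro t
    apply (hadj _ _).mpr
    left
    push_cast
    ring
  -- existence of a D-time
  have hDex : ∃ t : ℕ, g t ∈ D ∧ t ≤ n := by
    refine ⟨(jy - ix).val, ?_, (ZMod.val_lt _).le⟩
    have : ((jy - ix).val : ZMod n) = jy - ix := ZMod.natCast_rightInverse _
    simp only [hg, this]
    rw [show ix + (jy - ix) = jy by ring, hjy]
    exact hyD
  haveI : DecidablePred (fun t : ℕ => g t ∈ D ∧ t ≤ n) := Classical.decPred _
  set t1 := Nat.find hDex with ht1def
  obtain ⟨ht1D, ht1n⟩ := Nat.find_spec hDex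
  rw [← ht1def] at ht1D ht1n
  have ht1min : ∀ m, m < t1 → ¬(g m ∈ D ∧ m ≤ n) := fun m hm => Nat.find_min hDex hm
  have ht1ne0 : t1 ≠ 0 := by
    intro h0
    rw [h0] at ht1D
    rw [hg0] at ht1D
    exact hCDd x hxC ht1D
  obtain ⟨a, ha⟩ : ∃ a, t1 = a + 1 := ⟨t1 - 1, by omega⟩
  have hgaD : g a ∉ D := by
    intro hD
    exact ht1min a (by omega) ⟨hD, by omega⟩
  have hadja : G.Adj (g a) (g t1) := by rw [ha]; exact hadjc a
  have hgaC : g a ∉ C := fun hC => hCD _ hC _ ht1D hadja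
  have hgaQ : g a ∈ Q := by rcases hcover (g a) with h | h | h <;> tauto
  have ha1 : 1 ≤ a := by
    by_contra h0
    have : a = 0 := by omega
    rw [this, hg0] at hgaQ
    exact hQC x hgaQ hxC
  have ht1ltn : t1 < n := by
    rcases Nat.lt_or_ge t1 n with h | h
    · exact h
    · have : t1 = n := by omega
      rw [this, hgn] at ht1D
      exact (hCDd x hxC ht1D).elim
  -- second search: first return to C after t1
  have hCex : ∃ t : ℕ, g t ∈ C ∧ t1 < t ∧ t ≤ n := ⟨n, by rw [hgn]; exact hxC, ht1ltn, le_refl n⟩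
  haveI : DecidablePred (fun t : ℕ => g t ∈ C ∧ t1 < t ∧ t ≤ n) := Classical.decPred _
  set t2 := Nat.find hCex with ht2def
  obtain ⟨ht2C, ht1t2, ht2n⟩ := Nat.find_spec hCex
  rw [← ht2def] at ht2C ht1t2 ht2n
  have ht2min : ∀ m, m < t2 → ¬(g m ∈ C ∧ t1 < m ∧ m ≤ n) := fun m hm => Nat.find_min hCex hm
  obtain ⟨b, hb⟩ : ∃ b, t2 = b + 1 := ⟨t2 - 1, by omega⟩
  have hadjb : G.Adj (g b) (g t2) := by rw [hb]; exact hadjc b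
  have hbt1 : t1 ≤ b := by omega
  have hbQ : g b ∈ Q := by
    rcases Nat.eq_or_lt_of_le hbt1 with h | h
    · exfalso
      rw [← h] at hadjb
      exact hCD _ ht2C _ ht1D hadjb.symm
    · have hbC : g b ∉ C := by
        intro hC
        exact ht2min b (by omega) ⟨hC, h, by omega⟩
      have hbD : g b ∉ D := by
        intro hD
        exact hCD _ ht2C _ hD hadjb.symm
      rcases hcover (g b) with h' | h' | h' <;> tauto
  -- the two clique vertices on the hole
  have hane : a ≠ b := by
    intro h
    rw [h] at hgaQ
    -- then t1 = b+... a = b means t1 - 1 = t2 - 1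
    -- a = b with t1 = a+1 ≤ b = a means contradiction
    omega
  have haltb : a < b := by omega
  have hbn : b < n := by omega
  have han : a < n := by omega
  have hcastne : ((a : ℕ) : ZMod n) ≠ ((b : ℕ) : ZMod n) := by
    intro h
    exact absurd (zmodCastInj hnpos han hbn h) (by omega)
  have hfne : f (ix + (a : ℕ)) ≠ f (ix + (b : ℕ)) := by
    intro h
    exact hcastne (add_left_cancel (hinj h))
  have hadjQ : G.Adj (f (ix + (a : ℕ))) (f (ix + (b : ℕ))) := hQ hgaQ hbQ hfne
  rcases (hadj _ _).mp hadjQ with h1 | h1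
  · -- ix + b = ix + a + 1, so b = a+1 = t1, but t1 ≤ b means t1 = b, i.e. a+1 = b
    have : ((b : ℕ) : ZMod n) = ((t1 : ℕ) : ZMod n) := by
      have := add_left_cancel (a := ix) (b := ((b : ℕ) : ZMod n)) (c := ((t1 : ℕ) : ZMod n))
        (by rw [h1, ha]; push_cast; ring)
      exact this
    have hbt1' := zmodCastInj hnpos hbn ht1ltn this
    -- b = t1, but g b ∈ Q and g t1 ∈ D
    rw [← hbt1'] at ht1D
    exact hQD _ hbQ ht1D
  · -- ix + a = ix + b + 1, so a ≡ t2 (mod n)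
    have hcast : ((a : ℕ) : ZMod n) = ((t2 : ℕ) : ZMod n) := by
      have := add_left_cancel (a := ix) (b := ((a : ℕ) : ZMod n)) (c := ((t2 : ℕ) : ZMod n))
        (by rw [h1, hb]; push_cast; ring)
      exact this
    rcases Nat.lt_or_ge t2 n with h2 | h2
    · have := zmodCastInj hnpos han h2 hcast
      omega
    · have ht2eq : t2 = n := by omega
      have : ((a : ℕ) : ZMod n) = ((0 : ℕ) : ZMod n) := by
        rw [hcast, ht2eq]; simp [ZMod.natCast_self]
      have := zmodCastInj hnpos han hnpos this
      omega


lemma mem_closedNbhd {P : Set V} {v : V} :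
    v ∈ ClosedNbhd G P ↔ v ∈ P ∨ ∃ s ∈ P, G.Adj v s := Set.mem_union _ _ _

lemma bridging {S : Set V} (hS : WeaklyFPE (G.induce S)) (m : List V)
    (hmS : ∀ v ∈ m, v ∈ S) (hp : IsInducedPathList G m) (hlen : m.length ≤ 2)
    (W1 W2 : Set V) (h1S : W1 ⊆ S) (h2S : W2 ⊆ S)
    (hc1 : ChordalSet G W1) (hc2 : ChordalSet G W2)
    (hint : W1 ∩ W2 = {v | v ∈ m})
    (huni : W1 ∪ W2 = ClosedNbhd G {v | v ∈ m} ∩ S) :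
    ∃ Z1 Z2 : Set V, W1 ⊆ Z1 ∧ W2 ⊆ Z2 ∧ ChordalSet G Z1 ∧ ChordalSet G Z2 ∧
      Z1 ∩ Z2 = {v | v ∈ m} ∧ Z1 ∪ Z2 = S := by
  obtain ⟨m', hm'p, hm'len, hm'set⟩ :
      ∃ m' : List ↥S, IsInducedPathList (G.induce S) m' ∧ m'.length ≤ 2 ∧
        {x : ↥S | x ∈ m'} = {x : ↥S | ↑x ∈ m} := by
    match m, hp, hlen, hmS with
    | [], hp, _, _ => exact absurd rfl hp.1
    | [a], hp, _, hmS =>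
      refine ⟨[⟨a, hmS a (by simp)⟩], singleton_inducedPath _, by simp, ?_⟩
      ext x
      simp [Subtype.ext_iff]
    | [a, b], hp, _, hmS =>
      have hadjab : G.Adj a b := by
        have := (hp.2.2 0 1 (by simp) (by simp)).mpr (Or.inl rfl)
        simpa using this
      have hne : a ≠ b := hadjab.ne
      refine ⟨[⟨a, hmS a (by simp)⟩, ⟨b, hmS b (by simp)⟩], ⟨by simp, ?_, ?_⟩, by simp, ?_⟩
      · simp [Subtype.ext_iff, hne]
      · intro i j hi hj
        have hi2 : i < 2 := by simpa using hi
        have hj2 : j < 2 := by simpa using hj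
        interval_cases i <;> interval_cases j <;>
          simp [SimpleGraph.induce, SimpleGraph.comap_adj, Function.Embedding.coe_subtype,
            hadjab, hadjab.symm, SimpleGraph.irrefl]
      · ext x
        simp [Subtype.ext_iff]
    | a :: b :: c :: r, hp, hlen, hmS => simp at hlen
  have harg1 : (Subtype.val ⁻¹' W1) ∩ (Subtype.val ⁻¹' W2) = {v | v ∈ m'} := by
    ext x
    simp only [Set.mem_inter_iff, Set.mem_preimage]
    rw [show (↑x ∈ W1 ∧ ↑x ∈ W2) ↔ ↑x ∈ W1 ∩ W2 from Iff.rfl, hint]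
    have := Set.ext_iff.mp hm'set x
    simpa using this.symm
  have harg2 : (Subtype.val ⁻¹' W1) ∪ (Subtype.val ⁻¹' W2) =
      ClosedNbhd (G.induce S) {v | v ∈ m'} := by
    ext x
    simp only [Set.mem_union, Set.mem_preimage]
    rw [show (↑x ∈ W1 ∨ ↑x ∈ W2) ↔ ↑x ∈ W1 ∪ W2 from Iff.rfl, huni]
    simp only [Set.mem_inter_iff, mem_closedNbhd, x.2, and_true]
    constructor
    · rintro (hm | ⟨s, hs, hadj⟩)
      · left
        have := Set.ext_iff.mp hm'set x
        exact this.mpr hm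
      · right
        refine ⟨⟨s, hmS s hs⟩, ?_, hadj⟩
        exact (Set.ext_iff.mp hm'set _).mpr hs
    · rintro (hm | ⟨s, hs, hadj⟩)
      · left
        exact (Set.ext_iff.mp hm'set x).mp hm
      · right
        exact ⟨↑s, (Set.ext_iff.mp hm'set s).mp hs, hadj⟩
  have hres := hS m' hm'p hm'len (Subtype.val ⁻¹' W1) (Subtype.val ⁻¹' W2)
      (chordal_preimage hc1) (chordal_preimage hc2) harg1 harg2
  obtain ⟨X1, X2, hsub1, hsub2, hch1, hch2, hi, hu⟩ := hres
  refine ⟨Subtype.val '' X1, Subtype.val '' X2, ?_, ?_, chordal_image hch1,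
    chordal_image hch2, ?_, ?_⟩
  · intro w hw
    exact ⟨⟨w, h1S hw⟩, hsub1 hw, rfl⟩
  · intro w hw
    exact ⟨⟨w, h2S hw⟩, hsub2 hw, rfl⟩
  · rw [← Set.image_inter Subtype.val_injective, hi]
    ext v
    constructor
    · rintro ⟨x, hx, rfl⟩
      exact (Set.ext_iff.mp hm'set x).mp hx
    · intro hv
      exact ⟨⟨v, hmS v hv⟩, (Set.ext_iff.mp hm'set _).mpr hv, rfl⟩
  · rw [← Set.image_union, hu, Set.image_univ, Subtype.range_coe]


lemma chordal_empty : ChordalSet G (∅ : Set V) := by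
  rintro H hH ⟨n, hn, f, hinj, hr, hadj⟩
  exact absurd (hH (hr ▸ Set.mem_range_self 0)) (by simp)

lemma partitionLemma [Finite V]
    (hmin : ∀ S : Set V, S ≠ Set.univ → WeaklyFPE (G.induce S)) :
    ∀ (N : ℕ) (S : Set V), S.ncard ≤ N → S ≠ Set.univ →
      ∀ A B : Set V, (∀ v, v ∈ A → v ∈ B → False) → G.IsClique (A ∪ B) → A ∪ B ⊆ S →
      ∃ U1 U2 : Set V, A ⊆ U1 ∧ B ⊆ U2 ∧ U1 ∩ U2 = ∅ ∧ U1 ∪ U2 = S ∧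
        ChordalSet G U1 ∧ ChordalSet G U2 := by
  intro N
  induction N with
  | zero =>
    intro S hcard hSne A B hAB hclique hABS
    have hS : S = ∅ := (Set.ncard_eq_zero (Set.toFinite S)).mp (le_antisymm hcard (Nat.zero_le _))
    subst hS
    refine ⟨∅, ∅, ?_, ?_, by simp, by simp, chordal_empty, chordal_empty⟩
    · intro v hv; exact hABS (Or.inl hv)
    · intro v hv; exact hABS (Or.inr hv)
  | succ N ih =>
    intro S hcard hSne A B hAB hclique hABS
    have key : ∀ A B : Set V, (∀ v, v ∈ A → v ∈ B → False) → G.IsClique (A ∪ B) →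
        A ∪ B ⊆ S → ∀ q, q ∈ A →
        ∃ U1 U2 : Set V, A ⊆ U1 ∧ B ⊆ U2 ∧ U1 ∩ U2 = ∅ ∧ U1 ∪ U2 = S ∧
          ChordalSet G U1 ∧ ChordalSet G U2 := by
      clear hAB hclique hABS A B
      intro A B hAB hclique hABS q hqA
      have hqS : q ∈ S := hABS (Or.inl hqA)
      set S' := S ∩ {v | G.Adj q v} with hS'def
      have hqS' : q ∉ S' := fun h => G.irrefl h.2
      have hcard' : S'.ncard ≤ N := by
        have hssub : S' ⊂ S := ⟨Set.inter_subset_left, fun hsub => hqS' (hsub hqS)⟩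
        have := Set.ncard_lt_ncard hssub (Set.toFinite S)
        omega
      have hS'ne : S' ≠ Set.univ := by
        intro h
        exact hqS' (h ▸ Set.mem_univ q)
      have hsubAB : (A \ {q}) ∪ B ⊆ S' := by
        rintro v (⟨hvA, hvq⟩ | hvB)
        · refine ⟨hABS (Or.inl hvA), ?_⟩
          exact hclique (Or.inl hqA) (Or.inl hvA)
            (fun h => hvq (by simp [← h]))
        · refine ⟨hABS (Or.inr hvB), ?_⟩
          exact hclique (Or.inl hqA) (Or.inr hvB)
            (fun h => hAB q hqA (h ▸ hvB))
      have hdisj' : ∀ v, v ∈ A \ {q} → v ∈ B → False := fun v hv hvB => hAB v hv.1 hvB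
      have hclique' : G.IsClique ((A \ {q}) ∪ B) :=
        hclique.subset (Set.union_subset_union_left _ Set.diff_subset)
      obtain ⟨U1', U2', hAU1, hBU2, hU12, hU12un, hch1, hch2⟩ :=
        ih S' hcard' hS'ne _ _ hdisj' hclique' hsubAB
      have hU1S' : U1' ⊆ S' := hU12un ▸ Set.subset_union_left
      have hU2S' : U2' ⊆ S' := hU12un ▸ Set.subset_union_right
      have hWch : ∀ U' : Set V, U' ⊆ S' → ChordalSet G U' → ChordalSet G (insert q U') := by
        rintro U' hUS' hch H hH ⟨n, hn⟩
        by_cases hqH : q ∈ H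
        · refine hole_not_dominated hn hqH (fun v hv hvq => ?_)
          rcases hH hv with h | h
          · exact absurd h hvq
          · exact (hUS' h).2
        · exact hch H (fun v hv => ((hH hv).resolve_left (fun h => hqH (h ▸ hv)))) ⟨n, hn⟩
      have hW1S : insert q U1' ⊆ S :=
        Set.insert_subset hqS (hU1S'.trans Set.inter_subset_left)
      have hW2S : insert q U2' ⊆ S :=
        Set.insert_subset hqS (hU2S'.trans Set.inter_subset_left)
      have hint : (insert q U1') ∩ (insert q U2') = {v | v ∈ [q]} := by
        ext v
        simp only [Set.mem_inter_iff, Set.mem_insert_iff, Set.mem_setOf_eq,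
          List.mem_singleton]
        constructor
        · rintro ⟨h1 | h1, h2 | h2⟩
          · exact h1
          · exact h1
          · exact h2
          · exfalso
            have hmem : v ∈ U1' ∩ U2' := ⟨h1, h2⟩
            rw [hU12] at hmem
            exact hmem
        · rintro rfl
          exact ⟨Or.inl rfl, Or.inl rfl⟩
      have huni : (insert q U1') ∪ (insert q U2') = ClosedNbhd G {v | v ∈ [q]} ∩ S := by
        have hins : (insert q U1') ∪ (insert q U2') = insert q S' := by
          rw [← hU12un]
          ext v
          simp only [Set.mem_union, Set.mem_insert_iff]
          tauto
        rw [hins]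
        ext v
        simp only [Set.mem_insert_iff, Set.mem_inter_iff, mem_closedNbhd,
          Set.mem_setOf_eq, List.mem_singleton, hS'def]
        constructor
        · rintro (rfl | ⟨hvS, hadj⟩)
          · exact ⟨Or.inl rfl, hqS⟩
          · exact ⟨Or.inr ⟨q, rfl, hadj.symm⟩, hvS⟩
        · rintro ⟨rfl | ⟨s, rfl, hadj⟩, hvS⟩
          · exact Or.inl rfl
          · exact Or.inr ⟨hvS, hadj.symm⟩
      obtain ⟨Z1, Z2, hZ1, hZ2, hZc1, hZc2, hZint, hZuni⟩ :=
        bridging (hmin S hSne) [q] (by simpa using hqS) (singleton_inducedPath q)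
          (by simp) (insert q U1') (insert q U2') hW1S hW2S
          (hWch U1' hU1S' hch1) (hWch U2' hU2S' hch2) hint huni
      have hqZ1 : q ∈ Z1 := hZ1 (Set.mem_insert q U1')
      refine ⟨Z1, Z2 \ {q}, ?_, ?_, ?_, ?_, hZc1, chordal_mono Set.diff_subset hZc2⟩
      · intro a haA
        by_cases haq : a = q
        · exact haq ▸ hqZ1
        · exact hZ1 (Set.mem_insert_iff.mpr (Or.inr (hAU1 ⟨haA, by simp [haq]⟩)))
      · intro b hbB
        refine ⟨hZ2 (Set.mem_insert_iff.mpr (Or.inr (hBU2 hbB))), ?_⟩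
        simp only [Set.mem_singleton_iff]
        intro h
        exact hAB q hqA (h ▸ hbB)
      · ext v
        simp only [Set.mem_inter_iff, Set.mem_diff, Set.mem_singleton_iff,
          Set.mem_empty_iff_false, iff_false]
        rintro ⟨h1, h2, h3⟩
        have : v ∈ Z1 ∩ Z2 := ⟨h1, h2⟩
        rw [hZint] at this
        simp at this
        exact h3 this
      · ext v
        simp only [Set.mem_union, Set.mem_diff, Set.mem_singleton_iff]
        constructor
        · rintro (h | ⟨h, _⟩)
          · exact hZuni ▸ Set.mem_union_left _ h
          · exact hZuni ▸ Set.mem_union_right _ h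
        · intro hv
          have : v ∈ Z1 ∪ Z2 := hZuni.symm ▸ hv
          rcases this with h | h
          · exact Or.inl h
          · by_cases hvq : v = q
            · exact Or.inl (hvq ▸ hqZ1)
            · exact Or.inr ⟨h, hvq⟩
    rcases Set.eq_empty_or_nonempty S with hS | hSne'
    · subst hS
      refine ⟨∅, ∅, ?_, ?_, by simp, by simp, chordal_empty, chordal_empty⟩
      · intro v hv; exact hABS (Or.inl hv)
      · intro v hv; exact hABS (Or.inr hv)
    · rcases Set.eq_empty_or_nonempty A with hA | ⟨q, hqA⟩
      · rcases Set.eq_empty_or_nonempty B with hB | ⟨q, hqB⟩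
        · obtain ⟨q, hqS⟩ := hSne'
          obtain ⟨U1, U2, h1, h2, h3, h4, h5, h6⟩ :=
            key {q} ∅ (by simp) (by rw [Set.union_empty]; exact Set.pairwise_singleton q G.Adj)
              (by simpa using hqS) q rfl
          exact ⟨U1, U2, hA ▸ (Set.empty_subset _), hB ▸ (Set.empty_subset _), h3, h4, h5, h6⟩
        · obtain ⟨U1, U2, h1, h2, h3, h4, h5, h6⟩ :=
            key B A (fun v hv hv' => hAB v hv' hv)
              (by rwa [Set.union_comm]) (by rwa [Set.union_comm]) q hqB
          exact ⟨U2, U1, h2, h1, by rwa [Set.inter_comm], by rwa [Set.union_comm], h6, h5⟩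
      · exact key A B hAB hclique hABS q hqA


lemma combine {P W1 W2 Q C D Z1 Z2 U1 U2 : Set V}
    (hQ : G.IsClique Q)
    (hcover : ∀ v : V, v ∈ Q ∨ v ∈ C ∨ v ∈ D)
    (hQC : ∀ v, v ∈ Q → v ∈ C → False)
    (hQD : ∀ v, v ∈ Q → v ∈ D → False)
    (hCDd : ∀ v, v ∈ C → v ∈ D → False)
    (hCD : ∀ c ∈ C, ∀ d ∈ D, ¬ G.Adj c d)
    (hZc1 : ChordalSet G Z1) (hZc2 : ChordalSet G Z2)
    (hUc1 : ChordalSet G U1) (hUc2 : ChordalSet G U2)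
    (hZint : Z1 ∩ Z2 = P) (hUint : U1 ∩ U2 ⊆ P)
    (hZuni : Z1 ∪ Z2 = Q ∪ C) (hUuni : U1 ∪ U2 = Q ∪ D)
    (hQ1 : Z1 ∩ Q ⊆ U1) (hQ1' : U1 ∩ Q ⊆ Z1)
    (hQ2 : Z2 ∩ Q ⊆ U2) (hQ2' : U2 ∩ Q ⊆ Z2)
    (hW1 : W1 ⊆ Z1 ∪ U1) (hW2 : W2 ⊆ Z2 ∪ U2) :
    ExtendsToCover G P W1 W2 := by
  have hZ1Q : ∀ v ∈ Z1, v ∈ Q ∨ v ∈ C := fun v hv => by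
    have : v ∈ Z1 ∪ Z2 := Set.mem_union_left _ hv
    rwa [hZuni] at this
  have hZ2Q : ∀ v ∈ Z2, v ∈ Q ∨ v ∈ C := fun v hv => by
    have : v ∈ Z1 ∪ Z2 := Set.mem_union_right _ hv
    rwa [hZuni] at this
  have hU1Q : ∀ v ∈ U1, v ∈ Q ∨ v ∈ D := fun v hv => by
    have : v ∈ U1 ∪ U2 := Set.mem_union_left _ hv
    rwa [hUuni] at this
  have hU2Q : ∀ v ∈ U2, v ∈ Q ∨ v ∈ D := fun v hv => by
    have : v ∈ U1 ∪ U2 := Set.mem_union_right _ hv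
    rwa [hUuni] at this
  have hchordal : ∀ Za Ua : Set V, ChordalSet G Za → ChordalSet G Ua →
      Za ∪ Ua = Z1 ∪ U1 ∨ Za ∪ Ua = Z2 ∪ U2 → -- dummy
      True := fun _ _ _ _ _ => trivial
  refine ⟨Z1 ∪ U1, Z2 ∪ U2, hW1, hW2, ?_, ?_, ?_, ?_⟩
  · -- ChordalSet (Z1 ∪ U1)
    rintro H hH ⟨n, hn⟩
    rcases hole_side hQ hCD hcover hQC hQD hCDd hn with hno | hno
    · -- H misses C : H ⊆ U1
      refine hUc1 H (fun v hv => ?_) ⟨n, hn⟩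
      rcases hH hv with h | h
      · rcases hZ1Q v h with hq | hc
        · exact hQ1 ⟨h, hq⟩
        · exact absurd hc (hno v hv)
      · exact h
    · -- H misses D : H ⊆ Z1
      refine hZc1 H (fun v hv => ?_) ⟨n, hn⟩
      rcases hH hv with h | h
      · exact h
      · rcases hU1Q v h with hq | hd
        · exact hQ1' ⟨h, hq⟩
        · exact absurd hd (hno v hv)
  · rintro H hH ⟨n, hn⟩
    rcases hole_side hQ hCD hcover hQC hQD hCDd hn with hno | hno
    · refine hUc2 H (fun v hv => ?_) ⟨n, hn⟩
      rcases hH hv with h | h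
      · rcases hZ2Q v h with hq | hc
        · exact hQ2 ⟨h, hq⟩
        · exact absurd hc (hno v hv)
      · exact h
    · refine hZc2 H (fun v hv => ?_) ⟨n, hn⟩
      rcases hH hv with h | h
      · exact h
      · rcases hU2Q v h with hq | hd
        · exact hQ2' ⟨h, hq⟩
        · exact absurd hd (hno v hv)
  · -- intersection = P
    ext v
    constructor
    · rintro ⟨h1 | h1, h2 | h2⟩
      · exact hZint ▸ (⟨h1, h2⟩ : v ∈ Z1 ∩ Z2)
      · -- v ∈ Z1, v ∈ U2
        have hvQ : v ∈ Q := by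
          rcases hZ1Q v h1 with hq | hc
          · exact hq
          · rcases hU2Q v h2 with hq | hd
            · exact hq
            · exact absurd hd (fun h => hCDd v hc h)
        exact hUint ⟨hQ1 ⟨h1, hvQ⟩, h2⟩
      · have hvQ : v ∈ Q := by
          rcases hZ2Q v h2 with hq | hc
          · exact hq
          · rcases hU1Q v h1 with hq | hd
            · exact hq
            · exact absurd hd (fun h => hCDd v hc h)
        exact hUint ⟨h1, hQ2 ⟨h2, hvQ⟩⟩
      · exact hUint ⟨h1, h2⟩
    · intro hv
      rw [← hZint] at hv
      exact ⟨Or.inl hv.1, Or.inl hv.2⟩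
  · -- union = univ
    ext v
    simp only [Set.mem_univ, iff_true, Set.mem_union]
    rcases hcover v with h | h | h
    · have hm : v ∈ Z1 ∪ Z2 := by rw [hZuni]; exact Set.mem_union_left _ h
      rcases hm with h' | h'
      · exact Or.inl (Or.inl h')
      · exact Or.inr (Or.inl h')
    · have hm : v ∈ Z1 ∪ Z2 := by rw [hZuni]; exact Set.mem_union_right _ h
      rcases hm with h' | h'
      · exact Or.inl (Or.inl h')
      · exact Or.inr (Or.inl h')
    · have hm : v ∈ U1 ∪ U2 := by rw [hUuni]; exact Set.mem_union_right _ h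
      rcases hm with h' | h'
      · exact Or.inl (Or.inr h')
      · exact Or.inr (Or.inr h')

lemma pair_adj {l : List V} (hp : IsInducedPathList G l) (hlen : l.length ≤ 2)
    {u w : V} (hu : u ∈ l) (hw : w ∈ l) (huw : u ≠ w) : G.Adj u w := by
  match l, hp, hlen, hu, hw with
  | [a], _, _, hu, hw =>
    exact absurd ((List.mem_singleton.mp hu).trans (List.mem_singleton.mp hw).symm) huw
  | [a, b], hp, _, hu, hw =>
    have hadjab : G.Adj a b := by
      have := (hp.2.2 0 1 (by simp) (by simp)).mpr (Or.inl rfl)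
      simpa using this
    rcases List.mem_pair.mp hu with rfl | rfl <;> rcases List.mem_pair.mp hw with rfl | rfl
    · exact absurd rfl huw
    · exact hadjab
    · exact hadjab.symm
    · exact absurd rfl huw
  | a :: b :: c :: r, _, hlen, _, _ => simp at hlen


lemma assembly [Finite V]
    (hmin : ∀ S : Set V, S ≠ Set.univ → WeaklyFPE (G.induce S))
    (l : List V) (W1 W2 : Set V)
    (hp : IsInducedPathList G l) (hlen : l.length ≤ 2)
    (hc1 : ChordalSet G W1) (hc2 : ChordalSet G W2)
    (hint : W1 ∩ W2 = {v | v ∈ l})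
    (huni : W1 ∪ W2 = ClosedNbhd G {v | v ∈ l})
    (Q C D : Set V) (hQ : G.IsClique Q)
    (hcover : ∀ v : V, v ∈ Q ∨ v ∈ C ∨ v ∈ D)
    (hQC : ∀ v, v ∈ Q → v ∈ C → False)
    (hQD : ∀ v, v ∈ Q → v ∈ D → False)
    (hCDd : ∀ v, v ∈ C → v ∈ D → False)
    (hCD : ∀ c ∈ C, ∀ d ∈ D, ¬ G.Adj c d)
    (hCne : C.Nonempty) (hDne : D.Nonempty)
    (hPC : ∀ v ∈ l, v ∉ Q → v ∈ C) :
    ExtendsToCover G {v | v ∈ l} W1 W2 := by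
  have hPW1 : {v | v ∈ l} ⊆ W1 := by rw [← hint]; exact Set.inter_subset_left
  have hPW2 : {v | v ∈ l} ⊆ W2 := by rw [← hint]; exact Set.inter_subset_right
  have hSCne : Q ∪ C ≠ Set.univ := by
    obtain ⟨d, hd⟩ := hDne
    intro h
    have : d ∈ Q ∪ C := h ▸ Set.mem_univ d
    rcases this with hq | hc
    · exact hQD d hq hd
    · exact hCDd d hc hd
  have hSDne : Q ∪ D ≠ Set.univ := by
    obtain ⟨c, hc⟩ := hCne
    intro h
    have : c ∈ Q ∪ D := h ▸ Set.mem_univ c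
    rcases this with hq | hd
    · exact hQC c hq hc
    · exact hCDd c hc hd
  have hlSC : ∀ v ∈ l, v ∈ Q ∪ C := by
    intro v hv
    by_cases h : v ∈ Q
    · exact Or.inl h
    · exact Or.inr (hPC v hv h)
  have hinterdist : ∀ X : Set V, (W1 ∩ X) ∩ (W2 ∩ X) = (W1 ∩ W2) ∩ X := by
    intro X
    ext v
    simp only [Set.mem_inter_iff]
    tauto
  have hintC : (W1 ∩ (Q ∪ C)) ∩ (W2 ∩ (Q ∪ C)) = {v | v ∈ l} := by
    rw [hinterdist, hint]
    exact Set.inter_eq_left.mpr (fun v hv => hlSC v hv)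
  have huniC : (W1 ∩ (Q ∪ C)) ∪ (W2 ∩ (Q ∪ C)) = ClosedNbhd G {v | v ∈ l} ∩ (Q ∪ C) := by
    rw [← Set.union_inter_distrib_right, huni]
  obtain ⟨Z1, Z2, hZ1, hZ2, hZc1, hZc2, hZint, hZuni⟩ :=
    bridging (hmin _ hSCne) l hlSC hp hlen _ _ Set.inter_subset_right Set.inter_subset_right
      (chordal_mono Set.inter_subset_left hc1) (chordal_mono Set.inter_subset_left hc2)
      hintC huniC
  by_cases hPQ : ∃ p, p ∈ l ∧ p ∈ Q
  · -- Case (a) : the path meets Q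
    obtain ⟨p, hpl, hpQ⟩ := hPQ
    have hQCl : Q ⊆ ClosedNbhd G {v | v ∈ l} := by
      intro q hq
      by_cases hqp : q = p
      · exact mem_closedNbhd.mpr (Or.inl (by simpa [hqp] using hpl))
      · exact mem_closedNbhd.mpr (Or.inr ⟨p, hpl, hQ hq hpQ hqp⟩)
    have hQW : ∀ q ∈ Q, q ∈ W1 ∪ W2 := fun q hq => by
      rw [huni]; exact hQCl hq
    obtain ⟨m, hm_p, hm_len, hm_sub, hm_set, hm_cl⟩ :
        ∃ m : List V, IsInducedPathList G m ∧ m.length ≤ 2 ∧ (∀ v ∈ m, v ∈ Q ∪ D) ∧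
          ({v | v ∈ m} : Set V) = {v | v ∈ l} ∩ (Q ∪ D) ∧
          ClosedNbhd G {v | v ∈ m} ∩ (Q ∪ D) = ClosedNbhd G {v | v ∈ l} ∩ (Q ∪ D) := by
      match l, hp, hlen, hPC, hpl with
      | [a], hp, _, hPC, hpl =>
        have haQ : a ∈ Q := by
          have : p = a := List.mem_singleton.mp hpl
          exact this ▸ hpQ
        refine ⟨[a], hp, by simp, by simpa using Or.inl haQ, ?_, rfl⟩
        ext v
        simp only [Set.mem_inter_iff, Set.mem_setOf_eq, List.mem_singleton]
        exact ⟨fun h => ⟨h, h ▸ Or.inl haQ⟩, fun h => h.1⟩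
      | [a, b], hp, hl2, hPC, hpl =>
        have hadjab : G.Adj a b := by
          have := (hp.2.2 0 1 (by simp) (by simp)).mpr (Or.inl rfl)
          simpa using this
        by_cases haQ : a ∈ Q
        · by_cases hbQ : b ∈ Q
          · refine ⟨[a, b], hp, by simp, ?_, ?_, rfl⟩
            · intro v hv
              rcases List.mem_pair.mp hv with rfl | rfl
              · exact Or.inl haQ
              · exact Or.inl hbQ
            · ext v
              simp only [Set.mem_inter_iff, Set.mem_setOf_eq, List.mem_pair]
              constructor
              · rintro (rfl | rfl)
                · exact ⟨Or.inl rfl, Or.inl haQ⟩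
                · exact ⟨Or.inr rfl, Or.inl hbQ⟩
              · exact fun h => h.1
          · -- a ∈ Q, b ∈ C
            have hbC : b ∈ C := hPC b (by simp) hbQ
            have hbSD : b ∉ Q ∪ D := by
              rintro (h | h)
              · exact hQC b h hbC
              · exact hCDd b hbC h
            refine ⟨[a], singleton_inducedPath a, by simp, by simpa using Or.inl haQ, ?_, ?_⟩
            · ext v
              simp only [Set.mem_inter_iff, Set.mem_setOf_eq, List.mem_singleton, List.mem_pair]
              constructor
              · rintro rfl
                exact ⟨Or.inl rfl, Or.inl haQ⟩
              · rintro ⟨rfl | rfl, h2⟩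
                · rfl
                · exact absurd h2 hbSD
            · ext v
              simp only [Set.mem_inter_iff, mem_closedNbhd, Set.mem_setOf_eq,
                List.mem_singleton, List.mem_pair]
              constructor
              · rintro ⟨h, hSD⟩
                refine ⟨?_, hSD⟩
                rcases h with rfl | ⟨s, rfl, hadj⟩
                · exact Or.inl (Or.inl rfl)
                · exact Or.inr ⟨s, Or.inl rfl, hadj⟩
              · rintro ⟨h, hSD⟩
                refine ⟨?_, hSD⟩
                rcases h with (rfl | rfl) | ⟨s, (rfl | rfl), hadj⟩
                · exact Or.inl rfl
                · exact absurd hSD hbSD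
                · exact Or.inr ⟨s, rfl, hadj⟩
                · -- v adjacent to b ∈ C, v ∈ Q ∪ D
                  rcases hSD with hvQ | hvD
                  · by_cases hva : v = a
                    · exact Or.inl hva
                    · exact Or.inr ⟨a, rfl, hQ hvQ haQ hva⟩
                  · exact absurd hadj.symm (hCD s hbC v hvD)
        · by_cases hbQ : b ∈ Q
          · -- b ∈ Q, a ∈ C
            have haC : a ∈ C := hPC a (by simp) haQ
            have haSD : a ∉ Q ∪ D := by
              rintro (h | h)
              · exact hQC a h haC
              · exact hCDd a haC h
            refine ⟨[b], singleton_inducedPath b, by simp, by simpa using Or.inl hbQ, ?_, ?_⟩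
            · ext v
              simp only [Set.mem_inter_iff, Set.mem_setOf_eq, List.mem_singleton, List.mem_pair]
              constructor
              · rintro rfl
                exact ⟨Or.inr rfl, Or.inl hbQ⟩
              · rintro ⟨rfl | rfl, h2⟩
                · exact absurd h2 haSD
                · rfl
            · ext v
              simp only [Set.mem_inter_iff, mem_closedNbhd, Set.mem_setOf_eq,
                List.mem_singleton, List.mem_pair]
              constructor
              · rintro ⟨h, hSD⟩
                refine ⟨?_, hSD⟩
                rcases h with rfl | ⟨s, rfl, hadj⟩
                · exact Or.inl (Or.inr rfl)
                · exact Or.inr ⟨s, Or.inr rfl, hadj⟩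
              · rintro ⟨h, hSD⟩
                refine ⟨?_, hSD⟩
                rcases h with (rfl | rfl) | ⟨s, (rfl | rfl), hadj⟩
                · exact absurd hSD haSD
                · exact Or.inl rfl
                · rcases hSD with hvQ | hvD
                  · by_cases hvb : v = b
                    · exact Or.inl hvb
                    · exact Or.inr ⟨b, rfl, hQ hvQ hbQ hvb⟩
                  · exact absurd hadj.symm (hCD s haC v hvD)
                · exact Or.inr ⟨s, rfl, hadj⟩
          · exfalso
            rcases List.mem_pair.mp hpl with rfl | rfl
            · exact haQ hpQ
            · exact hbQ hpQ
      | a :: b :: c :: r, _, hl2, _, _ => simp at hl2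
    have hintD : (W1 ∩ (Q ∪ D)) ∩ (W2 ∩ (Q ∪ D)) = {v | v ∈ m} := by
      rw [hm_set, hinterdist, hint]
    have huniD : (W1 ∩ (Q ∪ D)) ∪ (W2 ∩ (Q ∪ D)) = ClosedNbhd G {v | v ∈ m} ∩ (Q ∪ D) := by
      rw [hm_cl, ← Set.union_inter_distrib_right, huni]
    obtain ⟨U1, U2, hU1, hU2, hUc1, hUc2, hUint, hUuni⟩ :=
      bridging (hmin _ hSDne) m hm_sub hm_p hm_len _ _ Set.inter_subset_right
        Set.inter_subset_right (chordal_mono Set.inter_subset_left hc1)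
        (chordal_mono Set.inter_subset_left hc2) hintD huniD
    have hmP : {v | v ∈ m} ⊆ {v | v ∈ l} := by rw [hm_set]; exact Set.inter_subset_left
    -- traces
    have htrZ1 : Z1 ∩ Q = W1 ∩ Q := by
      apply Set.Subset.antisymm
      · rintro v ⟨hvZ, hvQ⟩
        by_cases hvW : v ∈ W1
        · exact ⟨hvW, hvQ⟩
        · have hvW2 : v ∈ W2 := (hQW v hvQ).resolve_left hvW
          have hvZ2 : v ∈ Z2 := hZ2 ⟨hvW2, Or.inl hvQ⟩
          have : v ∈ {v | v ∈ l} := by rw [← hZint]; exact ⟨hvZ, hvZ2⟩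
          exact absurd (hPW1 this) hvW
      · rintro v ⟨hvW, hvQ⟩
        exact ⟨hZ1 ⟨hvW, Or.inl hvQ⟩, hvQ⟩
    have htrZ2 : Z2 ∩ Q = W2 ∩ Q := by
      apply Set.Subset.antisymm
      · rintro v ⟨hvZ, hvQ⟩
        by_cases hvW : v ∈ W2
        · exact ⟨hvW, hvQ⟩
        · have hvW1 : v ∈ W1 := (hQW v hvQ).resolve_right hvW
          have hvZ1 : v ∈ Z1 := hZ1 ⟨hvW1, Or.inl hvQ⟩
          have : v ∈ {v | v ∈ l} := by rw [← hZint]; exact ⟨hvZ1, hvZ⟩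
          exact absurd (hPW2 this) hvW
      · rintro v ⟨hvW, hvQ⟩
        exact ⟨hZ2 ⟨hvW, Or.inl hvQ⟩, hvQ⟩
    have htrU1 : U1 ∩ Q = W1 ∩ Q := by
      apply Set.Subset.antisymm
      · rintro v ⟨hvU, hvQ⟩
        by_cases hvW : v ∈ W1
        · exact ⟨hvW, hvQ⟩
        · have hvW2 : v ∈ W2 := (hQW v hvQ).resolve_left hvW
          have hvU2 : v ∈ U2 := hU2 ⟨hvW2, Or.inl hvQ⟩
          have : v ∈ {v | v ∈ m} := by rw [← hUint]; exact ⟨hvU, hvU2⟩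
          exact absurd (hPW1 (hmP this)) hvW
      · rintro v ⟨hvW, hvQ⟩
        exact ⟨hU1 ⟨hvW, Or.inl hvQ⟩, hvQ⟩
    have htrU2 : U2 ∩ Q = W2 ∩ Q := by
      apply Set.Subset.antisymm
      · rintro v ⟨hvU, hvQ⟩
        by_cases hvW : v ∈ W2
        · exact ⟨hvW, hvQ⟩
        · have hvW1 : v ∈ W1 := (hQW v hvQ).resolve_right hvW
          have hvU1 : v ∈ U1 := hU1 ⟨hvW1, Or.inl hvQ⟩
          have : v ∈ {v | v ∈ m} := by rw [← hUint]; exact ⟨hvU1, hvU⟩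
          exact absurd (hPW2 (hmP this)) hvW
      · rintro v ⟨hvW, hvQ⟩
        exact ⟨hU2 ⟨hvW, Or.inl hvQ⟩, hvQ⟩
    refine combine hQ hcover hQC hQD hCDd hCD hZc1 hZc2 hUc1 hUc2 hZint ?_ hZuni hUuni
      ?_ ?_ ?_ ?_ ?_ ?_
    · rw [hUint]; exact hmP
    · rw [htrZ1, ← htrU1]; exact Set.inter_subset_left
    · rw [htrU1, ← htrZ1]; exact Set.inter_subset_left
    · rw [htrZ2, ← htrU2]; exact Set.inter_subset_left
    · rw [htrU2, ← htrZ2]; exact Set.inter_subset_left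
    · intro w hw
      rcases hcover w with h | h | h
      · exact Or.inl (hZ1 ⟨hw, Or.inl h⟩)
      · exact Or.inl (hZ1 ⟨hw, Or.inr h⟩)
      · exact Or.inr (hU1 ⟨hw, Or.inr h⟩)
    · intro w hw
      rcases hcover w with h | h | h
      · exact Or.inl (hZ2 ⟨hw, Or.inl h⟩)
      · exact Or.inl (hZ2 ⟨hw, Or.inr h⟩)
      · exact Or.inr (hU2 ⟨hw, Or.inr h⟩)
  · -- Case (b) : the path avoids Q
    have hlC : ∀ v ∈ l, v ∈ C := fun v hv =>
      hPC v hv (fun hq => hPQ ⟨v, hv, hq⟩)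
    set A := Z1 ∩ Q with hAdef
    set B := Z2 ∩ Q with hBdef
    have hABdisj : ∀ v, v ∈ A → v ∈ B → False := by
      rintro v ⟨hv1, hvQ⟩ ⟨hv2, _⟩
      have : v ∈ {v | v ∈ l} := by rw [← hZint]; exact ⟨hv1, hv2⟩
      exact hPQ ⟨v, this, hvQ⟩
    have hABclique : G.IsClique (A ∪ B) :=
      hQ.subset (Set.union_subset Set.inter_subset_right Set.inter_subset_right)
    have hABSD : A ∪ B ⊆ Q ∪ D :=
      (Set.union_subset Set.inter_subset_right Set.inter_subset_right).trans
        Set.subset_union_left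
    obtain ⟨U1, U2, hAU1, hBU2, hUint0, hUuni, hUc1, hUc2⟩ :=
      partitionLemma hmin ((Q ∪ D).ncard) (Q ∪ D) le_rfl hSDne A B hABdisj hABclique hABSD
    have hQAB : ∀ q ∈ Q, q ∈ A ∪ B := by
      intro q hq
      have : q ∈ Z1 ∪ Z2 := by rw [hZuni]; exact Or.inl hq
      rcases this with h | h
      · exact Or.inl ⟨h, hq⟩
      · exact Or.inr ⟨h, hq⟩
    have hWD : ∀ (W : Set V), W ⊆ ClosedNbhd G {v | v ∈ l} → ∀ w ∈ W, w ∈ D → False := by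
      intro W hWc w hwW hwD
      rcases mem_closedNbhd.mp (hWc hwW) with h | ⟨s, hs, hadj⟩
      · exact hCDd w (hlC w h) hwD
      · exact hCD s (hlC s hs) w hwD hadj.symm
    have hW1c : W1 ⊆ ClosedNbhd G {v | v ∈ l} := by rw [← huni]; exact Set.subset_union_left
    have hW2c : W2 ⊆ ClosedNbhd G {v | v ∈ l} := by rw [← huni]; exact Set.subset_union_right
    refine combine hQ hcover hQC hQD hCDd hCD hZc1 hZc2 hUc1 hUc2 hZint ?_ hZuni hUuni
      ?_ ?_ ?_ ?_ ?_ ?_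
    · rw [hUint0]; exact Set.empty_subset _
    · exact hAU1
    · rintro v ⟨hvU, hvQ⟩
      rcases hQAB v hvQ with h | h
      · exact h.1
      · exfalso
        have : v ∈ U1 ∩ U2 := ⟨hvU, hBU2 h⟩
        rw [hUint0] at this
        exact this
    · exact hBU2
    · rintro v ⟨hvU, hvQ⟩
      rcases hQAB v hvQ with h | h
      · exfalso
        have : v ∈ U1 ∩ U2 := ⟨hAU1 h, hvU⟩
        rw [hUint0] at this
        exact this
      · exact h.1
    · intro w hw
      rcases hcover w with h | h | h
      · exact Or.inl (hZ1 ⟨hw, Or.inl h⟩)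
      · exact Or.inl (hZ1 ⟨hw, Or.inr h⟩)
      · exact absurd h (fun h' => hWD W1 hW1c w hw h')
    · intro w hw
      rcases hcover w with h | h | h
      · exact Or.inl (hZ2 ⟨hw, Or.inl h⟩)
      · exact Or.inl (hZ2 ⟨hw, Or.inr h⟩)
      · exact absurd h (fun h' => hWD W2 hW2c w hw h')

end Helpers

/-- A minimal non-weakly FPE graph has no clique cutset. -/
theorem stmt13 {V : Type u} [Finite V] (G : SimpleGraph V)
    (hG : MinNonWeaklyFPE G) :
    ∀ Q : Set V, ¬ IsCliqueCutset G Q := by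
  obtain ⟨hnw, hmin⟩ := hG
  intro Q hQcc
  obtain ⟨hclique, hnconn⟩ := hQcc
  rw [WeaklyFPE] at hnw
  push_neg at hnw
  obtain ⟨l, hp, hlen, W1, W2, hc1, hc2, hint, huni, hnext⟩ := hnw
  have hPW2 : {v | v ∈ l} ⊆ W2 := by rw [← hint]; exact Set.inter_subset_right
  rcases Set.eq_empty_or_nonempty (Qᶜ : Set V) with hQc | hQc
  · -- Q = univ : G is complete, no holes at all
    have hQuniv : Q = Set.univ := Set.compl_empty_iff.mp hQc
    have hallchordal : ∀ X : Set V, ChordalSet G X := by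
      rintro X H hH ⟨n, hn⟩
      obtain ⟨a, b, _, _, hab, hnadj⟩ := holeOn_exists_nonadj hn
      exact hnadj (hclique (hQuniv ▸ Set.mem_univ a) (hQuniv ▸ Set.mem_univ b) hab)
    refine hnext ⟨{v | v ∈ l} ∪ W2ᶜ, W2, ?_, le_refl W2, hallchordal _, hallchordal _, ?_, ?_⟩
    · intro w hw
      by_cases h : w ∈ W2
      · exact Or.inl (by rw [← hint]; exact ⟨hw, h⟩)
      · exact Or.inr h
    · ext v
      simp only [Set.mem_inter_iff, Set.mem_union, Set.mem_compl_iff, Set.mem_setOf_eq]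
      constructor
      · rintro ⟨h1 | h1, h2⟩
        · exact h1
        · exact absurd h2 h1
      · intro hv
        exact ⟨Or.inl hv, hPW2 hv⟩
    · ext v
      simp only [Set.mem_union, Set.mem_compl_iff, Set.mem_univ, iff_true]
      by_cases h : v ∈ W2
      · exact Or.inr h
      · exact Or.inl (Or.inr h)
  · -- Qᶜ nonempty and disconnected
    have hnpre : ¬ (G.induce (Qᶜ : Set V)).Preconnected := by
      intro hpre
      exact hnconn ((SimpleGraph.connected_iff _).mpr ⟨hpre, Set.nonempty_coe_sort.mpr hQc⟩)
    rw [SimpleGraph.Preconnected] at hnpre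
    push_neg at hnpre
    obtain ⟨x, y, hxy⟩ := hnpre
    set Cs : Set V := Subtype.val '' {z : ↥(Qᶜ : Set V) | (G.induce (Qᶜ : Set V)).Reachable x z}
      with hCsdef
    set Ds : Set V := (Qᶜ : Set V) \ Cs with hDsdef
    have hCsub : Cs ⊆ (Qᶜ : Set V) := by
      rintro v ⟨z, _, rfl⟩
      exact z.2
    have hxC : ↑x ∈ Cs := ⟨x, SimpleGraph.Reachable.refl x, rfl⟩
    have hyD : ↑y ∈ Ds := by
      refine ⟨y.2, ?_⟩
      rintro ⟨z, hz, hzy⟩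
      exact hxy (Subtype.ext hzy ▸ hz)
    have hQCd : ∀ v, v ∈ Q → v ∈ Cs → False := fun v hv hvC => (hCsub hvC) hv
    have hQDd : ∀ v, v ∈ Q → v ∈ Ds → False := fun v hv hvD => hvD.1 hv
    have hCDdd : ∀ v, v ∈ Cs → v ∈ Ds → False := fun v hvC hvD => hvD.2 hvC
    have hcover : ∀ v : V, v ∈ Q ∨ v ∈ Cs ∨ v ∈ Ds := by
      intro v
      by_cases h : v ∈ Q
      · exact Or.inl h
      · by_cases h2 : v ∈ Cs
        · exact Or.inr (Or.inl h2)
        · exact Or.inr (Or.inr ⟨h, h2⟩)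
    have hnoadj : ∀ c ∈ Cs, ∀ d ∈ Ds, ¬ G.Adj c d := by
      rintro c ⟨c', hc', rfl⟩ d hd hadj
      have hd' : d ∈ (Qᶜ : Set V) := hd.1
      have hadj' : (G.induce (Qᶜ : Set V)).Adj c' ⟨d, hd'⟩ := hadj
      have : (⟨d, hd'⟩ : ↥(Qᶜ : Set V)) ∈
          {z : ↥(Qᶜ : Set V) | (G.induce (Qᶜ : Set V)).Reachable x z} :=
        hc'.trans hadj'.reachable
      exact hd.2 ⟨⟨d, hd'⟩, this, rfl⟩
    have hCne : Cs.Nonempty := ⟨↑x, hxC⟩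
    have hDne : Ds.Nonempty := ⟨↑y, hyD⟩
    by_cases hside : ∀ v ∈ l, v ∉ Q → v ∈ Cs
    · exact hnext (assembly hmin l W1 W2 hp hlen hc1 hc2 hint huni Q Cs Ds hclique hcover
        hQCd hQDd hCDdd hnoadj hCne hDne hside)
    · push_neg at hside
      obtain ⟨v0, hv0l, hv0nQ, hv0nC⟩ := hside
      have hv0D : v0 ∈ Ds := by
        rcases hcover v0 with h | h | h
        · exact absurd h hv0nQ
        · exact absurd h hv0nC
        · exact h
      have hsideD : ∀ v ∈ l, v ∉ Q → v ∈ Ds := by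
        intro v hv hvnQ
        rcases hcover v with h | h | h
        · exact absurd h hvnQ
        · exfalso
          have hne : v ≠ v0 := fun he => hCDdd v h (he ▸ hv0D)
          exact hnoadj v h v0 hv0D (pair_adj hp hlen hv hv0l hne)
        · exact h
      have hcover' : ∀ v : V, v ∈ Q ∨ v ∈ Ds ∨ v ∈ Cs := by
        intro v
        rcases hcover v with h | h | h
        · exact Or.inl h
        · exact Or.inr (Or.inr h)
        · exact Or.inr (Or.inl h)
      exact hnext (assembly hmin l W1 W2 hp hlen hc1 hc2 hint huni Q Ds Cs hclique hcover'
        hQDd hQCd (fun v hd hc => hCDdd v hc hd)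
        (fun d hd c hc hadj => hnoadj c hc d hd hadj.symm) hDne hCne hsideD)
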